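/- Let ‖·‖ be any norm on ℝ². Then there exists an equilateral triangle inscribed in the unit ball B: three points x₁, x₂, x₃ with ‖x_i‖ = 1 for all i and ‖x₁ - x₂‖ = ‖x₂ - x₃‖ = ‖x₁ - x₃‖. -/

import Mathlib

open Real Set


section InscribedEq

variable {X : Type*} [NormedAddCommGroup X] [NormedSpace ℝ X]

/-- chord lemma: the normalization of a nonnegative combination of two unit
vectors is at distance at most `‖x - z‖` from `x`. -/
lemma inscribed_chord (x z : X) (hx : ‖x‖ = 1) (hz : ‖z‖ = 1) {A B : ℝ}
    (hA : 0 ≤ A) (hB : 0 ≤ B) (hq : A • x + B • z ≠ 0) :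
    ‖x - ‖A • x + B • z‖⁻¹ • (A • x + B • z)‖ ≤ ‖x - z‖ := by
  have hS : 0 < A + B := by
    rcases eq_or_lt_of_le (add_nonneg hA hB) with h | h
    · exfalso; apply hq
      have hA0 : A = 0 := by linarith
      have hB0 : B = 0 := by linarith
      rw [hA0, hB0, zero_smul, zero_smul, add_zero]
    · exact h
  set t : ℝ := B / (A + B) with ht
  have ht0 : 0 ≤ t := div_nonneg hB hS.le
  have ht1 : t ≤ 1 := by rw [ht, div_le_one hS]; linarith
  set q' : X := (1 - t) • x + t • z with hq'def
  have hqq : A • x + B • z = (A + B) • q' := by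
    have h2 : (A + B) * t = B := by rw [ht]; field_simp
    have h1 : (A + B) * (1 - t) = A := by nlinarith [h2]
    rw [hq'def, smul_add, smul_smul, smul_smul, h1, h2]
  have hq'0 : q' ≠ 0 := by
    intro h; apply hq; rw [hqq, h, smul_zero]
  have hs0 : 0 < ‖q'‖ := norm_pos_iff.2 hq'0
  have hs1 : ‖q'‖ ≤ 1 := by
    calc ‖q'‖ ≤ ‖(1 - t) • x‖ + ‖t • z‖ := norm_add_le _ _
    _ = (1 - t) + t := by
        rw [norm_smul, norm_smul, hx, hz, Real.norm_eq_abs, Real.norm_eq_abs,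
          abs_of_nonneg (by linarith), abs_of_nonneg ht0]; ring
    _ = 1 := by ring
  have hnorm : ‖A • x + B • z‖⁻¹ • (A • x + B • z) = ‖q'‖⁻¹ • q' := by
    rw [hqq, norm_smul, Real.norm_eq_abs, abs_of_pos hS, smul_smul]
    congr 1
    field_simp
  rw [hnorm]
  have key1 : x - ‖q'‖⁻¹ • q' = (x - q') + (q' - ‖q'‖⁻¹ • q') := by abel
  have key2 : x - q' = t • (x - z) := by
    rw [hq'def]; module
  have key3 : ‖q' - ‖q'‖⁻¹ • q'‖ = 1 - ‖q'‖ := by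
    have h0 : q' - ‖q'‖⁻¹ • q' = (1 - ‖q'‖⁻¹) • q' := by rw [sub_smul, one_smul]
    rw [h0, norm_smul, Real.norm_eq_abs]
    have e1 : |1 - ‖q'‖⁻¹| * ‖q'‖ = |(1 - ‖q'‖⁻¹) * ‖q'‖| := by
      rw [abs_mul, abs_of_nonneg (norm_nonneg _)]
    have e2 : (1 - ‖q'‖⁻¹) * ‖q'‖ = ‖q'‖ - 1 := by field_simp
    rw [e1, e2, abs_of_nonpos (by linarith), neg_sub]
  have key4 : 1 - ‖q'‖ ≤ (1 - t) * ‖x - z‖ := by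
    have : ‖z‖ - ‖z - q'‖ ≤ ‖q'‖ := by
      have := norm_sub_norm_le z q'
      linarith
    have hzq : z - q' = (1 - t) • (z - x) := by
      rw [hq'def]; module
    rw [hzq, norm_smul, Real.norm_eq_abs, abs_of_nonneg (by linarith)] at this
    rw [hz] at this
    rw [norm_sub_rev x z]
    linarith
  calc ‖x - ‖q'‖⁻¹ • q'‖ ≤ ‖x - q'‖ + ‖q' - ‖q'‖⁻¹ • q'‖ := by
        rw [key1]; exact norm_add_le _ _
    _ = t * ‖x - z‖ + (1 - ‖q'‖) := by
        rw [key2, key3, norm_smul, Real.norm_eq_abs, abs_of_nonneg ht0]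
    _ ≤ t * ‖x - z‖ + (1 - t) * ‖x - z‖ := by linarith
    _ = ‖x - z‖ := by ring

end InscribedEq


section InscribedEq2

variable {X : Type*} [NormedAddCommGroup X] [NormedSpace ℝ X]

noncomputable def circ (e₁ e₂ : X) (θ : ℝ) : X :=
  ‖Real.cos θ • e₁ + Real.sin θ • e₂‖⁻¹ • (Real.cos θ • e₁ + Real.sin θ • e₂)

lemma circ_norm (e₁ e₂ : X)
    (h : ∀ θ : ℝ, Real.cos θ • e₁ + Real.sin θ • e₂ ≠ 0) (θ : ℝ) :
    ‖circ e₁ e₂ θ‖ = 1 := by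
  rw [circ, norm_smul, Real.norm_eq_abs,
    abs_of_pos (inv_pos.2 (norm_pos_iff.2 (h θ))),
    inv_mul_cancel₀ (norm_pos_iff.2 (h θ)).ne']

lemma circ_cont (e₁ e₂ : X)
    (h : ∀ θ : ℝ, Real.cos θ • e₁ + Real.sin θ • e₂ ≠ 0) :
    Continuous (circ e₁ e₂) := by
  have hw : Continuous (fun θ : ℝ => Real.cos θ • e₁ + Real.sin θ • e₂) :=
    (Real.continuous_cos.smul continuous_const).add
      (Real.continuous_sin.smul continuous_const)
  exact ((hw.norm.inv₀ (fun θ => norm_ne_zero_iff.2 (h θ))).smul hw)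

lemma circ_antipodal (e₁ e₂ : X) (θ : ℝ) :
    circ e₁ e₂ (θ + π) = -circ e₁ e₂ θ := by
  have hw : Real.cos (θ + π) • e₁ + Real.sin (θ + π) • e₂
      = -(Real.cos θ • e₁ + Real.sin θ • e₂) := by
    rw [Real.cos_add_pi, Real.sin_add_pi, neg_smul, neg_smul, neg_add]
  rw [circ, circ, hw, norm_neg, smul_neg]

lemma circ_neg_e₂ (e₁ e₂ : X) (θ : ℝ) :
    circ e₁ (-e₂) θ = circ e₁ e₂ (-θ) := by
  have : Real.cos θ • e₁ + Real.sin θ • (-e₂)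
      = Real.cos (-θ) • e₁ + Real.sin (-θ) • e₂ := by
    rw [Real.cos_neg, Real.sin_neg, smul_neg, neg_smul]
  rw [circ, circ, this]

lemma circ_mono (e₁ e₂ : X)
    (h : ∀ θ : ℝ, Real.cos θ • e₁ + Real.sin θ • e₂ ≠ 0)
    {s t : ℝ} (h0 : 0 ≤ s) (hst : s ≤ t) (htπ : t ≤ π) :
    ‖circ e₁ e₂ 0 - circ e₁ e₂ s‖ ≤ ‖circ e₁ e₂ 0 - circ e₁ e₂ t‖ := by
  have hn := circ_norm e₁ e₂ h
  rcases eq_or_lt_of_le htπ with htop | htlt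
  · -- t = π : right side is 2, left side ≤ 2
    subst htop
    have hπ : circ e₁ e₂ π = -circ e₁ e₂ 0 := by
      have := circ_antipodal e₁ e₂ 0
      rwa [zero_add] at this
    rw [hπ, sub_neg_eq_add]
    have h2 : ‖circ e₁ e₂ 0 + circ e₁ e₂ 0‖ = 2 := by
      rw [← two_smul ℝ, norm_smul, Real.norm_eq_abs, hn 0]
      norm_num
    rw [h2]
    calc ‖circ e₁ e₂ 0 - circ e₁ e₂ s‖ ≤ ‖circ e₁ e₂ 0‖ + ‖circ e₁ e₂ s‖ :=
          norm_sub_le _ _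
      _ = 2 := by rw [hn 0, hn s]; norm_num
  · rcases eq_or_lt_of_le (h0.trans hst) with ht0 | ht0
    · -- t = 0, so s = 0
      have hs0 : s = 0 := le_antisymm (hst.trans ht0.symm.le) h0
      rw [hs0, ← ht0]
    · -- 0 < t < π
      have hsin : 0 < Real.sin t := Real.sin_pos_of_pos_of_lt_pi ht0 htlt
      set a : ℝ := Real.sin (t - s) / Real.sin t with ha
      set b : ℝ := Real.sin s / Real.sin t with hb
      have ha0 : 0 ≤ a :=
        div_nonneg (Real.sin_nonneg_of_nonneg_of_le_pi (by linarith) (by linarith)) hsin.le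
      have hb0 : 0 ≤ b :=
        div_nonneg (Real.sin_nonneg_of_nonneg_of_le_pi h0 (by linarith)) hsin.le
      have hc1 : a + b * Real.cos t = Real.cos s := by
        rw [ha, hb, Real.sin_sub]
        field_simp
        ring
      have hc2 : b * Real.sin t = Real.sin s := by
        rw [hb]; field_simp
      have hw0 : Real.cos 0 • e₁ + Real.sin 0 • e₂ = e₁ := by
        rw [Real.cos_zero, Real.sin_zero, one_smul, zero_smul, add_zero]
      have hws : Real.cos s • e₁ + Real.sin s • e₂
          = a • (Real.cos 0 • e₁ + Real.sin 0 • e₂)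
            + b • (Real.cos t • e₁ + Real.sin t • e₂) := by
        rw [hw0, smul_add, smul_smul, smul_smul, ← hc1, ← hc2]
        module
      set A : ℝ := a * ‖Real.cos 0 • e₁ + Real.sin 0 • e₂‖ with hA
      set B : ℝ := b * ‖Real.cos t • e₁ + Real.sin t • e₂‖ with hB
      have hA0 : 0 ≤ A := mul_nonneg ha0 (norm_nonneg _)
      have hB0 : 0 ≤ B := mul_nonneg hb0 (norm_nonneg _)
      have hrep : A • circ e₁ e₂ 0 + B • circ e₁ e₂ t
          = Real.cos s • e₁ + Real.sin s • e₂ := by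
        rw [hws, hA, hB, circ, circ, smul_smul, smul_smul]
        congr 2
        · rw [mul_assoc, mul_inv_cancel₀ (norm_ne_zero_iff.2 (h 0)), mul_one]
        · rw [mul_assoc, mul_inv_cancel₀ (norm_ne_zero_iff.2 (h t)), mul_one]
      have hq : A • circ e₁ e₂ 0 + B • circ e₁ e₂ t ≠ 0 := by
        rw [hrep]; exact h s
      have hcircs : circ e₁ e₂ s
          = ‖A • circ e₁ e₂ 0 + B • circ e₁ e₂ t‖⁻¹
            • (A • circ e₁ e₂ 0 + B • circ e₁ e₂ t) := by
        rw [hrep, circ]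
      rw [hcircs]
      exact inscribed_chord (circ e₁ e₂ 0) (circ e₁ e₂ t) (hn 0) (hn t) hA0 hB0 hq

end InscribedEq2


lemma exists_cont_inverse {G : ℝ → ℝ} {a b : ℝ} (hab : a < b) (hGc : Continuous G)
    (hmono : StrictMonoOn G (Icc a b)) :
    ∃ Φ : ℝ → ℝ, Continuous Φ ∧
      ∀ y ∈ Icc (G a) (G b), Φ y ∈ Icc a b ∧ G (Φ y) = y := by
  have hmem_a : a ∈ Icc a b := left_mem_Icc.2 hab.le
  have hmem_b : b ∈ Icc a b := right_mem_Icc.2 hab.le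
  have hGab : G a ≤ G b := (hmono hmem_a hmem_b hab).le
  haveI : CompactSpace (Icc a b) := isCompact_iff_compactSpace.mp isCompact_Icc
  have hmapsto : ∀ s : Icc a b, G s ∈ Icc (G a) (G b) := by
    intro ⟨s, hs⟩
    exact ⟨hmono.monotoneOn hmem_a hs hs.1, hmono.monotoneOn hs hmem_b hs.2⟩
  set eset : Icc a b → Icc (G a) (G b) := fun s => ⟨G s, hmapsto s⟩ with heset
  have hinj : Function.Injective eset := by
    intro s t hst
    have : G s = G t := congrArg Subtype.val hst
    exact Subtype.ext (hmono.injOn s.2 t.2 this)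
  have hsurj : Function.Surjective eset := by
    intro ⟨y, hy⟩
    obtain ⟨s, hs, hGs⟩ := intermediate_value_Icc hab.le hGc.continuousOn hy
    exact ⟨⟨s, hs⟩, Subtype.ext hGs⟩
  set E : Icc a b ≃ Icc (G a) (G b) := Equiv.ofBijective eset ⟨hinj, hsurj⟩ with hE
  have hEc : Continuous E := by
    have : Continuous eset := (hGc.comp continuous_subtype_val).subtype_mk _
    exact this
  set H := hEc.homeoOfEquivCompactToT2 with hH
  -- clamp
  set cl : ℝ → ℝ := fun y => min (max y (G a)) (G b) with hcl
  have hclmem : ∀ y : ℝ, cl y ∈ Icc (G a) (G b) := by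
    intro y
    constructor
    · exact le_min (le_max_right _ _) hGab
    · exact min_le_right _ _
  have hclc : Continuous cl := (continuous_id.max continuous_const).min continuous_const
  refine ⟨fun y => (H.symm ⟨cl y, hclmem y⟩ : ℝ), ?_, ?_⟩
  · exact continuous_subtype_val.comp (H.symm.continuous.comp (hclc.subtype_mk _))
  · intro y hy
    have hcly : cl y = y := by
      rw [hcl]
      simp only [max_eq_left hy.1, min_eq_left hy.2]
    refine ⟨(H.symm ⟨cl y, hclmem y⟩).2, ?_⟩
    have h3 : G ((H.symm ⟨cl y, hclmem y⟩ : Icc a b) : ℝ) = cl y := by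
      have h2 := H.apply_symm_apply ⟨cl y, hclmem y⟩
      exact congrArg Subtype.val h2
    show G ((H.symm ⟨cl y, hclmem y⟩ : Icc a b) : ℝ) = y
    rw [h3, hcly]


section Main

variable {X : Type*} [NormedAddCommGroup X] [NormedSpace ℝ X]


lemma inscribed_main (γ : ℝ → X) (hc : Continuous γ) (hu : ∀ θ, ‖γ θ‖ = 1)
    (hanti : ∀ θ, γ (θ + π) = -γ θ)
    (hfm : ∀ ⦃s t : ℝ⦄, 0 ≤ s → s ≤ t → t ≤ π → ‖γ 0 - γ s‖ ≤ ‖γ 0 - γ t‖)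
    (hgm : ∀ ⦃s t : ℝ⦄, 0 ≤ s → s ≤ t → t ≤ π → ‖γ 0 - γ (-s)‖ ≤ ‖γ 0 - γ (-t)‖) :
    ∃ x₁ x₂ x₃ : X, ‖x₁‖ = 1 ∧ ‖x₂‖ = 1 ∧ ‖x₃‖ = 1 ∧
      ∃ d : ℝ, 0 < d ∧ ‖x₁ - x₂‖ = d ∧ ‖x₂ - x₃‖ = d ∧ ‖x₁ - x₃‖ = d := by
  have hπ : (0:ℝ) < π := Real.pi_pos
  have hneg : ∀ θ : ℝ, γ (θ - π) = -γ θ := by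
    intro θ
    have h := hanti (θ - π)
    have h2 : θ - π + π = θ := by ring
    rw [h2] at h
    rw [h, neg_neg]
  set f : ℝ → ℝ := fun t => ‖γ 0 - γ t‖ with hfdef
  set g : ℝ → ℝ := fun t => ‖γ 0 - γ (-t)‖ with hgdef
  have hfc : Continuous f := (continuous_const.sub hc).norm
  have hgc : Continuous g := (continuous_const.sub (hc.comp continuous_neg)).norm
  have hf0 : f 0 = 0 := by simp [hfdef]
  have hg0 : g 0 = 0 := by simp [hgdef]
  have hγπ : γ π = -γ 0 := by have h := hanti 0; rwa [zero_add] at h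
  have hγnegπ : γ (-π) = -γ 0 := by have h := hneg 0; rwa [zero_sub] at h
  have two_eq : ∀ u : X, ‖u‖ = 1 → ‖u - -u‖ = 2 := by
    intro u hu1
    rw [sub_neg_eq_add, ← two_smul ℝ, norm_smul, hu1, Real.norm_eq_abs]
    norm_num
  have hfπ : f π = 2 := by rw [hfdef]; simp only; rw [hγπ]; exact two_eq _ (hu 0)
  have hgπ : g π = 2 := by rw [hgdef]; simp only; rw [hγnegπ]; exact two_eq _ (hu 0)
  have hfnn : ∀ t, 0 ≤ f t := fun t => norm_nonneg _
  have hgnn : ∀ t, 0 ≤ g t := fun t => norm_nonneg _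
  have hfle : ∀ t, f t ≤ 2 := by
    intro t
    calc f t ≤ ‖γ 0‖ + ‖γ t‖ := norm_sub_le _ _
      _ = 2 := by rw [hu 0, hu t]; norm_num
  set M : ℝ → ℝ := fun t => max (f t) (g (π - t)) with hMdef
  have hMc : Continuous M := hfc.max (hgc.comp (continuous_const.sub continuous_id))
  have hMpos : ∀ t : ℝ, 0 < M t := by
    intro t
    rcases lt_or_ge 0 (M t) with h | h
    · exact h
    exfalso
    have h1 : f t ≤ 0 := le_trans (le_max_left _ _) h
    have h2 : g (π - t) ≤ 0 := le_trans (le_max_right _ _) h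
    have e1 : γ 0 = γ t := by
      have : f t = 0 := le_antisymm h1 (hfnn t)
      rw [hfdef] at this
      exact sub_eq_zero.mp (norm_eq_zero.mp this)
    have e2 : γ 0 = -γ t := by
      have h3 : g (π - t) = 0 := le_antisymm h2 (hgnn _)
      rw [hgdef] at h3
      have h4 := sub_eq_zero.mp (norm_eq_zero.mp h3)
      have h5 : -(π - t) = t - π := by ring
      rw [h5, hneg t] at h4
      exact h4
    have e3 : γ t = -γ t := e1.symm.trans e2
    have e4 : γ t = 0 := by
      have h7 : (2 : ℝ) • γ t = 0 := by
        rw [two_smul]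
        nth_rewrite 2 [e3]
        simp
      rcases smul_eq_zero.mp h7 with h8 | h8
      · norm_num at h8
      · exact h8
    have := hu t
    rw [e4, norm_zero] at this
    norm_num at this
  obtain ⟨tmin, htmin, hmin⟩ :=
    isCompact_Icc.exists_isMinOn ⟨0, left_mem_Icc.2 hπ.le⟩ hMc.continuousOn
  set m₁ : ℝ := M tmin with hm₁def
  have hm₁pos : 0 < m₁ := hMpos tmin
  have hm₁le : ∀ t ∈ Icc (0:ℝ) π, m₁ ≤ M t := fun t ht => isMinOn_iff.mp hmin t ht
  -- key approximate solution
  have key : ∀ δ : ℝ, 0 < δ → δ * π ≤ m₁ / 2 →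
      ∃ p : ℝ × ℝ, p.1 ∈ Icc (0:ℝ) π ∧ p.2 ∈ Icc (0:ℝ) π ∧ m₁ / 2 ≤ f p.1 ∧
        ‖γ p.1 - γ (-p.2)‖ = f p.1 ∧ |f p.1 - g p.2| ≤ δ * π := by
    intro δ hδ hδm
    set F : ℝ → ℝ := fun t => f t + δ * t with hFdef
    set G : ℝ → ℝ := fun t => g t + δ * t with hGdef
    have hFc : Continuous F := hfc.add (continuous_const.mul continuous_id)
    have hG'c : Continuous G := hgc.add (continuous_const.mul continuous_id)
    have hGmono : StrictMonoOn G (Icc 0 π) := by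
      intro s hs t ht hst
      have h1 : g s ≤ g t := hgm hs.1 hst.le ht.2
      have h2 : δ * s < δ * t := mul_lt_mul_of_pos_left hst hδ
      simp only [hGdef]
      linarith
    have hG0 : G 0 = 0 := by simp only [hGdef]; rw [hg0]; ring
    have hGπ : G π = 2 + δ * π := by simp only [hGdef]; rw [hgπ]
    -- find t₁
    set φ : ℝ → ℝ := fun t => F t - G (π - t) with hφdef
    have hφc : Continuous φ := hFc.sub (hG'c.comp (continuous_const.sub continuous_id))
    have hφ0 : φ 0 = -(2 + δ * π) := by
      simp only [hφdef, hFdef]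
      rw [hf0, sub_zero, hGπ]
      ring
    have hφπ : φ π = 2 + δ * π := by
      simp only [hφdef, hFdef]
      rw [hfπ, sub_self, hG0]
      ring
    have h0mem : (0:ℝ) ∈ Icc (φ 0) (φ π) := by
      rw [hφ0, hφπ]
      have hδπ : 0 ≤ δ * π := mul_nonneg hδ.le hπ.le
      constructor <;> linarith
    obtain ⟨t₁, ht₁, hφt₁⟩ := intermediate_value_Icc hπ.le hφc.continuousOn h0mem
    set σ₁ : ℝ := π - t₁ with hσ₁def
    have hσ₁mem : σ₁ ∈ Icc (0:ℝ) π := ⟨by simp [hσ₁def]; linarith [ht₁.2], by simp [hσ₁def]; linarith [ht₁.1]⟩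
    have hFG : F t₁ = G σ₁ := by
      have : F t₁ - G σ₁ = 0 := hφt₁
      linarith
    have hfg1 : f t₁ - g σ₁ = δ * (σ₁ - t₁) := by
      simp only [hFdef, hGdef] at hFG
      linear_combination hFG
    have habs1 : |f t₁ - g σ₁| ≤ δ * π := by
      rw [hfg1, abs_mul, abs_of_pos hδ]
      have : |σ₁ - t₁| ≤ π := by
        rw [abs_le]
        constructor <;> [linarith [hσ₁mem.1, ht₁.2]; linarith [hσ₁mem.2, ht₁.1]]
      exact mul_le_mul_of_nonneg_left this hδ.le
    have hft₁ : m₁ / 2 ≤ f t₁ := by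
      have hMt₁ : m₁ ≤ max (f t₁) (g σ₁) := hm₁le t₁ ht₁
      rcases le_max_iff.mp hMt₁ with h | h
      · linarith
      · have := abs_le.mp habs1
        linarith
    -- continuous inverse of G
    obtain ⟨Φ, hΦc, hΦ⟩ := exists_cont_inverse hπ hG'c hGmono
    set σf : ℝ → ℝ := fun t => Φ (F t) with hσfdef
    have hσfc : Continuous σf := hΦc.comp hFc
    have hFmem : ∀ t ∈ Icc (0:ℝ) π, F t ∈ Icc (G 0) (G π) := by
      intro t ht
      rw [hG0, hGπ]
      constructor
      · have := hfnn t
        have h9 : 0 ≤ δ * t := mul_nonneg hδ.le ht.1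
        simp only [hFdef]
        linarith [hfnn t]
      · simp only [hFdef]
        have h1 := hfle t
        have h2 : δ * t ≤ δ * π := mul_le_mul_of_nonneg_left ht.2 hδ.le
        linarith
    have hσfmem : ∀ t ∈ Icc (0:ℝ) π, σf t ∈ Icc (0:ℝ) π :=
      fun t ht => (hΦ _ (hFmem t ht)).1
    have hGσf : ∀ t ∈ Icc (0:ℝ) π, G (σf t) = F t :=
      fun t ht => (hΦ _ (hFmem t ht)).2
    have hσft₁ : σf t₁ = σ₁ := by
      apply hGmono.injOn (hσfmem t₁ ht₁) hσ₁mem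
      rw [hGσf t₁ ht₁, hFG]
    have hπmem : π ∈ Icc (0:ℝ) π := right_mem_Icc.2 hπ.le
    have hσfπ : σf π = π := by
      apply hGmono.injOn (hσfmem π hπmem) hπmem
      rw [hGσf π hπmem, hGπ]
      simp only [hFdef]
      rw [hfπ]
    -- the IVT function
    set H : ℝ → ℝ := fun t => ‖γ t - γ (-(σf t))‖ - f t with hHdef
    have hHc : Continuous H :=
      ((hc.sub (hc.comp hσfc.neg)).norm).sub hfc
    have hHt₁ : H t₁ = 2 - f t₁ := by
      simp only [hHdef]
      rw [hσft₁]
      have h5 : -σ₁ = t₁ - π := by rw [hσ₁def]; ring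
      rw [h5, hneg t₁, two_eq _ (hu t₁)]
    have hHπ : H π = -2 := by
      simp only [hHdef]
      rw [hσfπ, hγπ]
      have : -π = 0 - π := by ring
      rw [this, hneg 0, sub_self, norm_zero, hfπ]
      ring
    have h0mem2 : (0:ℝ) ∈ Icc (H π) (H t₁) := by
      rw [hHπ, hHt₁]
      exact ⟨by norm_num, by linarith [hfle t₁]⟩
    obtain ⟨t₂, ht₂, hHt₂⟩ := intermediate_value_Icc' ht₁.2 hHc.continuousOn h0mem2
    have ht₂mem : t₂ ∈ Icc (0:ℝ) π := ⟨ht₁.1.trans ht₂.1, ht₂.2⟩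
    refine ⟨(t₂, σf t₂), ht₂mem, hσfmem t₂ ht₂mem, ?_, ?_, ?_⟩
    · exact le_trans hft₁ (hfm ht₁.1 ht₂.1 ht₂.2)
    · have : H t₂ = 0 := hHt₂
      simp only [hHdef] at this
      linarith [this]
    · have hGF : g (σf t₂) + δ * (σf t₂) = f t₂ + δ * t₂ := by
        have := hGσf t₂ ht₂mem
        simp only [hGdef, hFdef] at this
        exact this
      have he : f t₂ - g (σf t₂) = δ * (σf t₂ - t₂) := by linear_combination -hGF
      rw [he, abs_mul, abs_of_pos hδ]
      have habs2 : |σf t₂ - t₂| ≤ π := by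
        have h6 := hσfmem t₂ ht₂mem
        rw [abs_le]
        constructor
        · linarith [h6.1, ht₂mem.2]
        · linarith [h6.2, ht₂mem.1]
      exact mul_le_mul_of_nonneg_left habs2 hδ.le
  -- the nested compact sets
  set Z : ℕ → Set (ℝ × ℝ) := fun n =>
    {p : ℝ × ℝ | p.1 ∈ Icc (0:ℝ) π ∧ p.2 ∈ Icc (0:ℝ) π ∧ m₁ / 2 ≤ f p.1 ∧
      ‖γ p.1 - γ (-p.2)‖ = f p.1 ∧ |f p.1 - g p.2| ≤ min (m₁ / 2) ((1:ℝ) / ((n:ℝ) + 1))} with hZdef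
  have hZne : ∀ n, (Z n).Nonempty := by
    intro n
    set ε : ℝ := min (m₁ / 2) (1 / ((n:ℝ) + 1)) with hεdef
    have hε : 0 < ε := lt_min (by linarith) (by positivity)
    obtain ⟨p, h1, h2, h3, h4, h5⟩ := key (ε / π) (div_pos hε hπ)
      (by rw [div_mul_cancel₀ _ hπ.ne']; exact min_le_left _ _)
    refine ⟨p, h1, h2, h3, h4, ?_⟩
    rwa [div_mul_cancel₀ _ hπ.ne'] at h5
  have hZcl : ∀ n, IsClosed (Z n) := by
    intro n
    have e1 : IsClosed {p : ℝ × ℝ | p.1 ∈ Icc (0:ℝ) π} :=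
      isClosed_Icc.preimage continuous_fst
    have e2 : IsClosed {p : ℝ × ℝ | p.2 ∈ Icc (0:ℝ) π} :=
      isClosed_Icc.preimage continuous_snd
    have e3 : IsClosed {p : ℝ × ℝ | m₁ / 2 ≤ f p.1} :=
      isClosed_le continuous_const (hfc.comp continuous_fst)
    have e4 : IsClosed {p : ℝ × ℝ | ‖γ p.1 - γ (-p.2)‖ = f p.1} :=
      isClosed_eq ((hc.comp continuous_fst).sub (hc.comp continuous_snd.neg)).norm
        (hfc.comp continuous_fst)
    have e5 : IsClosed {p : ℝ × ℝ | |f p.1 - g p.2| ≤ min (m₁ / 2) ((1:ℝ) / ((n:ℝ) + 1))} :=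
      isClosed_le ((hfc.comp continuous_fst).sub (hgc.comp continuous_snd)).abs
        continuous_const
    have : Z n = {p : ℝ × ℝ | p.1 ∈ Icc (0:ℝ) π} ∩ ({p : ℝ × ℝ | p.2 ∈ Icc (0:ℝ) π} ∩
        ({p : ℝ × ℝ | m₁ / 2 ≤ f p.1} ∩ ({p : ℝ × ℝ | ‖γ p.1 - γ (-p.2)‖ = f p.1} ∩
          {p : ℝ × ℝ | |f p.1 - g p.2| ≤ min (m₁ / 2) (1 / (n + 1))}))) := by
      ext p
      simp only [hZdef, mem_setOf_eq, mem_inter_iff]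
    rw [this]
    exact e1.inter (e2.inter (e3.inter (e4.inter e5)))
  have hZdec : ∀ n, Z (n + 1) ⊆ Z n := by
    intro n p hp
    obtain ⟨h1, h2, h3, h4, h5⟩ := hp
    refine ⟨h1, h2, h3, h4, le_trans h5 (min_le_min le_rfl ?_)⟩
    apply one_div_le_one_div_of_le
    · positivity
    · push_cast
      linarith
  have hZ0cpt : IsCompact (Z 0) := by
    apply IsCompact.of_isClosed_subset (isCompact_Icc.prod isCompact_Icc) (hZcl 0)
    intro p hp
    exact ⟨hp.1, hp.2.1⟩
  obtain ⟨p, hp⟩ :=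
    IsCompact.nonempty_iInter_of_sequence_nonempty_isCompact_isClosed Z hZdec hZne hZ0cpt hZcl
  have hpn : ∀ n, p ∈ Z n := by
    intro n
    exact mem_iInter.mp hp n
  obtain ⟨h1, h2, h3, h4, _⟩ := hpn 0
  have habs0 : |f p.1 - g p.2| = 0 := by
    by_contra hne
    have hpos : 0 < |f p.1 - g p.2| := (abs_nonneg _).lt_of_ne (Ne.symm hne)
    obtain ⟨n, hn⟩ := exists_nat_one_div_lt hpos
    have h5 := (hpn n).2.2.2.2
    have h6 : |f p.1 - g p.2| ≤ 1 / ((n:ℝ) + 1) := le_trans h5 (min_le_right _ _)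
    linarith
  have hfg : g p.2 = f p.1 := by
    have := abs_eq_zero.mp habs0
    linarith
  refine ⟨γ 0, γ p.1, γ (-p.2), hu 0, hu p.1, hu _, f p.1, ?_, rfl, h4, hfg⟩
  linarith [h3, hm₁pos]

end Main


theorem inscribed_equilateral_triangle' (X : Type*) [NormedAddCommGroup X]
    [NormedSpace ℝ X] (hdim : Module.finrank ℝ X = 2) :
    ∃ x₁ x₂ x₃ : X, ‖x₁‖ = 1 ∧ ‖x₂‖ = 1 ∧ ‖x₃‖ = 1 ∧
      ∃ d : ℝ, 0 < d ∧ ‖x₁ - x₂‖ = d ∧ ‖x₂ - x₃‖ = d ∧ ‖x₁ - x₃‖ = d := by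
  have hfin : FiniteDimensional ℝ X :=
    Module.finite_of_finrank_pos (by rw [hdim]; norm_num)
  set b : Module.Basis (Fin 2) ℝ X := Module.finBasisOfFinrankEq ℝ X hdim with hb
  set e₁ : X := b 0 with he₁
  set e₂ : X := b 1 with he₂
  have hcoef : ∀ c s : ℝ, c • e₁ + s • e₂ = 0 → c = 0 ∧ s = 0 := by
    intro c s hcs
    have h01 := b.linearIndependent
    rw [Fintype.linearIndependent_iff] at h01
    have h02 := h01 ![c, s] (by
      rw [Fin.sum_univ_two]
      simpa using hcs)
    exact ⟨h02 0, h02 1⟩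
  have hw : ∀ θ : ℝ, Real.cos θ • e₁ + Real.sin θ • e₂ ≠ 0 := by
    intro θ h
    obtain ⟨h1, h2⟩ := hcoef _ _ h
    have h3 := Real.sin_sq_add_cos_sq θ
    rw [h1, h2] at h3
    norm_num at h3
  have hw' : ∀ θ : ℝ, Real.cos θ • e₁ + Real.sin θ • (-e₂) ≠ 0 := by
    intro θ h
    rw [smul_neg, ← neg_smul] at h
    obtain ⟨h1, h2⟩ := hcoef _ _ h
    have h3 := Real.sin_sq_add_cos_sq θ
    rw [h1] at h3
    have h4 : Real.sin θ = 0 := by linarith [neg_eq_zero.mp h2]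
    rw [h4] at h3
    norm_num at h3
  apply inscribed_main (circ e₁ e₂) (circ_cont _ _ hw) (circ_norm _ _ hw)
    (circ_antipodal _ _)
  · intro s t h0 hst htπ
    exact circ_mono e₁ e₂ hw h0 hst htπ
  · intro s t h0 hst htπ
    have h := circ_mono e₁ (-e₂) hw' h0 hst htπ
    rwa [circ_neg_e₂ e₁ e₂ 0, circ_neg_e₂ e₁ e₂ s, circ_neg_e₂ e₁ e₂ t,
      neg_zero] at h


/-- For any norm on a 2-dimensional real vector space, there is an equilateral triangle
inscribed in the unit ball: three unit vectors with equal positive pairwise distances. -/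
theorem inscribed_equilateral_triangle (X : Type*) [NormedAddCommGroup X]
    [NormedSpace ℝ X] (hdim : Module.finrank ℝ X = 2) :
    ∃ x₁ x₂ x₃ : X, ‖x₁‖ = 1 ∧ ‖x₂‖ = 1 ∧ ‖x₃‖ = 1 ∧
      ∃ d : ℝ, 0 < d ∧ ‖x₁ - x₂‖ = d ∧ ‖x₂ - x₃‖ = d ∧ ‖x₁ - x₃‖ = d := by
  exact inscribed_equilateral_triangle' X hdim
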